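/- For every continuously differentiable function g : [r_i, r_o] → ℝ with g(r_i) = g(r_o) = 0, the weighted Wirtinger-type inequality ∫_{r_i}^{r_o} r·g'(r)² dr ≥ (π/ln η)² · ∫_{r_i}^{r_o} g(r)²/r dr holds. -/

import Mathlib

open Real MeasureTheory

/-- `sin x ≥ (3/4) c` when `0 < c ≤ x ≤ 1`. -/
lemma aux_sin_lb {x c : ℝ} (h0 : 0 < c) (hc : c ≤ x) (hx : x ≤ 1) :
    3 / 4 * c ≤ Real.sin x := by
  have hx0 : 0 < x := h0.trans_le hc
  have h := Real.sin_gt_sub_cube hx0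
  have h3 : x ^ 3 ≤ x := by nlinarith [mul_nonneg (mul_nonneg hx0.le (sub_nonneg.2 hx)) (by linarith : (0:ℝ) ≤ 1 + x)]
  linarith

set_option maxHeartbeats 1000000 in
/-- Weighted Wirtinger-type inequality on the annulus `[ri, ro]` with
`η = ri / ro`. -/
theorem stmt_7
    (ri ro : ℝ) (hri : 0 < ri) (hio : ri < ro)
    (g : ℝ → ℝ) (hg : ContDiffOn ℝ 1 g (Set.Icc ri ro))
    (hgi : g ri = 0) (hgo : g ro = 0) :
    ∫ r in ri..ro, r * (deriv g r) ^ 2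
      ≥ (Real.pi / Real.log (ri / ro)) ^ 2 * ∫ r in ri..ro, (g r) ^ 2 / r := by
  have hro : (0:ℝ) < ro := hri.trans hio
  set L : ℝ := Real.log ro - Real.log ri with hLdef
  have hL : 0 < L := sub_pos.2 (Real.log_lt_log hri hio)
  set W : ℝ := Real.pi / L with hWdef
  have hW : 0 < W := div_pos Real.pi_pos hL
  have hk : (Real.pi / Real.log (ri / ro)) ^ 2 = W ^ 2 := by
    rw [Real.log_div hri.ne' hro.ne']
    have : Real.log ri - Real.log ro = -L := by rw [hLdef]; ring
    rw [this, div_neg, neg_sq]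
  set θ : ℝ → ℝ := fun r => W * (Real.log r - Real.log ri) with hθdef
  have hθ0 : ∀ r ∈ Set.Ioo ri ro, 0 < θ r := by
    intro r hr
    exact mul_pos hW (sub_pos.2 (Real.log_lt_log hri hr.1))
  have hθπ : ∀ r ∈ Set.Ioo ri ro, θ r < Real.pi := by
    intro r hr
    have h1 : Real.log r - Real.log ri < L := by
      have := Real.log_lt_log (hri.trans hr.1) hr.2
      simp only [hLdef]; linarith
    have : W * (Real.log r - Real.log ri) < W * L := by
      exact mul_lt_mul_of_pos_left h1 hW
    simpa [hθdef, hWdef, div_mul_cancel₀ _ hL.ne'] using this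
  have hsinpos : ∀ r ∈ Set.Ioo ri ro, 0 < Real.sin (θ r) := fun r hr =>
    Real.sin_pos_of_pos_of_lt_pi (hθ0 r hr) (hθπ r hr)
  -- the derivative within
  set dw : ℝ → ℝ := derivWithin g (Set.Icc ri ro) with hdwdef
  have hdwc : ContinuousOn dw (Set.Icc ri ro) :=
    hg.continuousOn_derivWithin (uniqueDiffOn_Icc hio) le_rfl
  have hgc : ContinuousOn g (Set.Icc ri ro) := hg.continuousOn
  have hIccmem : ∀ r ∈ Set.Ioo ri ro, Set.Icc ri ro ∈ nhds r := fun r hr =>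
    Icc_mem_nhds hr.1 hr.2
  have hgd : ∀ r ∈ Set.Ioo ri ro, HasDerivAt g (dw r) r := by
    intro r hr
    have h1 : DifferentiableWithinAt ℝ g (Set.Icc ri ro) r :=
      (hg.differentiableOn one_ne_zero) r (Set.Ioo_subset_Icc_self hr)
    have h2 : DifferentiableAt ℝ g r := h1.differentiableAt (hIccmem r hr)
    have h3 : dw r = deriv g r := derivWithin_of_mem_nhds (hIccmem r hr)
    rw [h3]; exact h2.hasDerivAt
  -- integrand
  set F : ℝ → ℝ := fun t => t * dw t ^ 2 - W ^ 2 * (g t ^ 2 / t) with hFdef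
  have hFc : ContinuousOn F (Set.Icc ri ro) := by
    apply ContinuousOn.sub
    · exact continuousOn_id.mul (hdwc.pow 2)
    · exact continuousOn_const.mul (((hgc.pow 2).div continuousOn_id)
        (fun t ht => (hri.trans_le ht.1).ne'))
  have hFi : IntervalIntegrable F volume ri ro := by
    apply ContinuousOn.intervalIntegrable
    rwa [Set.uIcc_of_le hio.le]
  set P : ℝ → ℝ := fun x => ∫ t in ri..x, F t with hPdef
  have hPc : ContinuousOn P (Set.Icc ri ro) := by
    rw [show Set.Icc ri ro = Set.uIcc ri ro from (Set.uIcc_of_le hio.le).symm]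
    apply intervalIntegral.continuousOn_primitive_interval
    rw [Set.uIcc_of_le hio.le]
    exact hFc.integrableOn_compact isCompact_Icc
  set H : ℝ → ℝ := fun r => W * (Real.cos (θ r) / Real.sin (θ r)) * g r ^ 2 with hHdef
  -- key pointwise derivative bound
  have key : ∀ r ∈ Set.Ioo ri ro, ∃ d, 0 ≤ d ∧ HasDerivAt (fun x => P x - H x) d r := by
    intro r hr
    have hr0 : (0:ℝ) < r := hri.trans hr.1
    have hsin := hsinpos r hr
    -- derivative of P
    have hP : HasDerivAt P (F r) r := by
      apply intervalIntegral.integral_hasDerivAt_right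
      · exact hFi.mono_set (by
          rw [Set.uIcc_of_le hio.le, Set.uIcc_of_le hr.1.le]
          exact Set.Icc_subset_Icc le_rfl hr.2.le)
      · exact (hFc.mono Set.Ioo_subset_Icc_self).stronglyMeasurableAtFilter
          isOpen_Ioo r hr
      · exact (hFc r (Set.Ioo_subset_Icc_self hr)).continuousAt (hIccmem r hr)
    -- derivative of θ
    have hθ' : HasDerivAt θ (W * r⁻¹) r := by
      simpa using ((Real.hasDerivAt_log hr0.ne').sub_const (Real.log ri)).const_mul W
    have hsin' : HasDerivAt (fun x => Real.sin (θ x)) (Real.cos (θ r) * (W * r⁻¹)) r :=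
      (Real.hasDerivAt_sin (θ r)).comp r hθ'
    have hcos' : HasDerivAt (fun x => Real.cos (θ x)) (-Real.sin (θ r) * (W * r⁻¹)) r :=
      (Real.hasDerivAt_cos (θ r)).comp r hθ'
    have hQ : HasDerivAt (fun x => Real.cos (θ x) / Real.sin (θ x))
        ((-Real.sin (θ r) * (W * r⁻¹) * Real.sin (θ r) -
          Real.cos (θ r) * (Real.cos (θ r) * (W * r⁻¹))) / Real.sin (θ r) ^ 2) r :=
      hcos'.div hsin' hsin.ne'
    have hg2 : HasDerivAt (fun x => g x ^ 2) (2 * g r * dw r) r := by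
      have := ((hgd r hr).fun_pow 2)
      simpa [mul_comm, mul_assoc, mul_left_comm] using this
    have hH' : HasDerivAt H (W * (((-Real.sin (θ r) * (W * r⁻¹) * Real.sin (θ r) -
          Real.cos (θ r) * (Real.cos (θ r) * (W * r⁻¹))) / Real.sin (θ r) ^ 2) * g r ^ 2 +
          (Real.cos (θ r) / Real.sin (θ r)) * (2 * g r * dw r))) r := by
      have h1 := (hQ.mul hg2).const_mul W
      simpa [hHdef, mul_assoc] using h1
    refine ⟨_, ?_, hP.sub hH'⟩
    -- nonnegativity
    have hpyth : Real.sin (θ r) ^ 2 + Real.cos (θ r) ^ 2 = 1 := Real.sin_sq_add_cos_sq (θ r)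
    have hfact : (F r - W * (((-Real.sin (θ r) * (W * r⁻¹) * Real.sin (θ r) -
          Real.cos (θ r) * (Real.cos (θ r) * (W * r⁻¹))) / Real.sin (θ r) ^ 2) * g r ^ 2 +
          (Real.cos (θ r) / Real.sin (θ r)) * (2 * g r * dw r))) * (r * Real.sin (θ r) ^ 2)
        = (r * Real.sin (θ r) * dw r - W * Real.cos (θ r) * g r) ^ 2 := by
      simp only [hFdef]
      field_simp
      nlinarith [hpyth, sq_nonneg (g r), sq_nonneg (dw r)]
    have hpos : 0 < r * Real.sin (θ r) ^ 2 := mul_pos hr0 (pow_pos hsin 2)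
    nlinarith [sq_nonneg (r * Real.sin (θ r) * dw r - W * Real.cos (θ r) * g r)]
  -- Monotone
  have hMono : MonotoneOn (fun x => P x - H x) (Set.Ioo ri ro) := by
    apply monotoneOn_of_deriv_nonneg (convex_Ioo ri ro)
    · intro r hr
      obtain ⟨d, _, hd⟩ := key r hr
      exact hd.continuousAt.continuousWithinAt
    · intro r hr
      rw [interior_Ioo] at hr
      obtain ⟨d, _, hd⟩ := key r hr
      exact hd.differentiableAt.differentiableWithinAt
    · intro r hr
      rw [interior_Ioo] at hr
      obtain ⟨d, hd0, hd⟩ := key r hr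
      rw [hd.deriv]; exact hd0
  -- limits of H
  have hM : ∃ M : ℝ, 0 ≤ M ∧ ∀ s ∈ Set.Icc ri ro, |g s| ≤ M * |s - ri| ∧ |g s| ≤ M * |ro - s| := by
    obtain ⟨x, hx, hxmax⟩ := isCompact_Icc.exists_isMaxOn (Set.nonempty_Icc.2 hio.le)
      (hdwc.abs)
    rw [isMaxOn_iff] at hxmax
    refine ⟨|dw x|, abs_nonneg _, fun s hs => ?_⟩
    have hder : ∀ y ∈ Set.Icc ri ro, HasDerivWithinAt g (dw y) (Set.Icc ri ro) y :=
      fun y hy => ((hg.differentiableOn one_ne_zero) y hy).hasDerivWithinAt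
    have hbd : ∀ y ∈ Set.Icc ri ro, ‖dw y‖ ≤ |dw x| := fun y hy => hxmax y hy
    have h1 := (convex_Icc ri ro).norm_image_sub_le_of_norm_hasDerivWithin_le hder hbd
      (Set.left_mem_Icc.2 hio.le) hs
    have h2 := (convex_Icc ri ro).norm_image_sub_le_of_norm_hasDerivWithin_le hder hbd
      (Set.right_mem_Icc.2 hio.le) hs
    rw [hgi] at h1; rw [hgo] at h2
    simp only [Real.norm_eq_abs, sub_zero] at h1 h2
    exact ⟨h1, by rwa [abs_sub_comm s ro] at h2⟩
  obtain ⟨M, hM0, hMb⟩ := hM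
  set C : ℝ := 4 * ro * M ^ 2 / (3 * W) with hCdef
  have hC0 : 0 ≤ C := by positivity
  have habs : ∀ s ∈ Set.Ioo ri ro, ∀ δ : ℝ, 0 < δ → |g s| ≤ M * δ →
      3 / 4 * (W * δ / ro) ≤ Real.sin (θ s) → |H s| ≤ W * (C * δ) := by
    intro s hs δ hδ hgb hsinlb
    have hsin := hsinpos s hs
    have hg2 : g s ^ 2 ≤ (M * δ) ^ 2 := by
      rw [← sq_abs (g s)]
      exact pow_le_pow_left₀ (abs_nonneg _) hgb 2
    have h4 : g s ^ 2 / Real.sin (θ s) ≤ C * δ := by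
      rw [div_le_iff₀ hsin]
      have h5 : C * δ * (3 / 4 * (W * δ / ro)) ≤ C * δ * Real.sin (θ s) :=
        mul_le_mul_of_nonneg_left hsinlb (by positivity)
      have h6 : C * δ * (3 / 4 * (W * δ / ro)) = (M * δ) ^ 2 := by
        rw [hCdef]; field_simp
      linarith
    have h8eq : H s = W * (Real.cos (θ s) / Real.sin (θ s)) * g s ^ 2 := rfl
    have h7 : |H s| = W * (|Real.cos (θ s)| / Real.sin (θ s)) * g s ^ 2 := by
      rw [h8eq, abs_mul, abs_mul, abs_of_pos hW, abs_of_nonneg (sq_nonneg (g s)),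
        abs_div, abs_of_pos hsin]
    rw [h7]
    calc W * (|Real.cos (θ s)| / Real.sin (θ s)) * g s ^ 2
        ≤ W * (1 / Real.sin (θ s)) * g s ^ 2 := by
          gcongr
          exact Real.abs_cos_le_one _
      _ = W * (g s ^ 2 / Real.sin (θ s)) := by ring
      _ ≤ W * (C * δ) := mul_le_mul_of_nonneg_left h4 hW.le
  have hθcont : ∀ x : ℝ, 0 < x → ContinuousAt θ x := by
    intro x hx
    exact continuousAt_const.mul ((Real.continuousAt_log hx.ne').sub continuousAt_const)
  have hHi : Filter.Tendsto H (nhdsWithin ri (Set.Ioo ri ro)) (nhds 0) := by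
    have hθsmall : ∀ᶠ s in nhdsWithin ri (Set.Ioo ri ro), θ s < 1 := by
      have h1 : Filter.Tendsto θ (nhdsWithin ri (Set.Ioo ri ro)) (nhds (θ ri)) :=
        ((hθcont ri hri).tendsto).mono_left nhdsWithin_le_nhds
      have h2 : θ ri = 0 := by simp [hθdef]
      rw [h2] at h1
      exact h1.eventually_lt_const (by norm_num)
    apply squeeze_zero_norm' (a := fun s => W * (C * (s - ri)))
    · filter_upwards [self_mem_nhdsWithin, hθsmall] with s hs h1
      have hδ : 0 < s - ri := sub_pos.2 hs.1
      have hs0 : 0 < s := hri.trans hs.1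
      have hgb : |g s| ≤ M * (s - ri) := by
        have := (hMb s (Set.Ioo_subset_Icc_self hs)).1
        rwa [abs_of_pos hδ] at this
      have hlog : (s - ri) / ro ≤ Real.log s - Real.log ri := by
        have h3 := Real.log_le_sub_one_of_pos (div_pos hri hs0)
        rw [Real.log_div hri.ne' hs0.ne'] at h3
        have h4 : (s - ri) / s ≤ Real.log s - Real.log ri := by
          have h5 : (s - ri) / s = 1 - ri / s := by field_simp
          linarith
        have h6 : (s - ri) / ro ≤ (s - ri) / s :=
          div_le_div_of_nonneg_left hδ.le hs0 hs.2.le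
        linarith
      have hsinlb : 3 / 4 * (W * (s - ri) / ro) ≤ Real.sin (θ s) := by
        apply aux_sin_lb (by positivity) ?_ h1.le
        calc W * (s - ri) / ro = W * ((s - ri) / ro) := by ring
          _ ≤ W * (Real.log s - Real.log ri) := mul_le_mul_of_nonneg_left hlog hW.le
      rw [Real.norm_eq_abs]
      exact habs s hs (s - ri) hδ hgb hsinlb
    · have h1 : Filter.Tendsto (fun s : ℝ => W * (C * (s - ri))) (nhdsWithin ri (Set.Ioo ri ro))
          (nhds (W * (C * (ri - ri)))) := by
        apply Filter.Tendsto.mono_left _ nhdsWithin_le_nhds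
        exact (continuousAt_const.mul (continuousAt_const.mul
          (continuousAt_id.sub continuousAt_const))).tendsto
      simpa using h1
  have hHo : Filter.Tendsto H (nhdsWithin ro (Set.Ioo ri ro)) (nhds 0) := by
    have hθro : θ ro = Real.pi := by
      simp only [hθdef]
      rw [show Real.log ro - Real.log ri = L from rfl, hWdef, div_mul_cancel₀ _ hL.ne']
    have hθsmall : ∀ᶠ u in nhdsWithin ro (Set.Ioo ri ro), Real.pi - θ u < 1 := by
      have h1 : Filter.Tendsto (fun u => Real.pi - θ u) (nhdsWithin ro (Set.Ioo ri ro))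
          (nhds (Real.pi - θ ro)) :=
        ((continuousAt_const.sub (hθcont ro hro)).tendsto).mono_left nhdsWithin_le_nhds
      rw [hθro, sub_self] at h1
      exact h1.eventually_lt_const (by norm_num)
    apply squeeze_zero_norm' (a := fun u => W * (C * (ro - u)))
    · filter_upwards [self_mem_nhdsWithin, hθsmall] with u hu h1
      have hδ : 0 < ro - u := sub_pos.2 hu.2
      have hu0 : 0 < u := hri.trans hu.1
      have hgb : |g u| ≤ M * (ro - u) := by
        have := (hMb u (Set.Ioo_subset_Icc_self hu)).2
        rwa [abs_of_pos hδ] at this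
      have hlog : (ro - u) / ro ≤ Real.log ro - Real.log u := by
        have h3 := Real.log_le_sub_one_of_pos (div_pos hu0 hro)
        rw [Real.log_div hu0.ne' hro.ne'] at h3
        have h5 : (ro - u) / ro = 1 - u / ro := by field_simp
        linarith
      have hsinlb : 3 / 4 * (W * (ro - u) / ro) ≤ Real.sin (θ u) := by
        rw [← Real.sin_pi_sub]
        apply aux_sin_lb (by positivity) ?_ h1.le
        have h8 : Real.pi - θ u = W * (Real.log ro - Real.log u) := by
          rw [← hθro]; simp only [hθdef]; ring
        rw [h8]
        calc W * (ro - u) / ro = W * ((ro - u) / ro) := by ring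
          _ ≤ W * (Real.log ro - Real.log u) := mul_le_mul_of_nonneg_left hlog hW.le
      rw [Real.norm_eq_abs]
      exact habs u hu (ro - u) hδ hgb hsinlb
    · have h1 : Filter.Tendsto (fun u : ℝ => W * (C * (ro - u))) (nhdsWithin ro (Set.Ioo ri ro))
          (nhds (W * (C * (ro - ro)))) := by
        apply Filter.Tendsto.mono_left _ nhdsWithin_le_nhds
        exact (continuousAt_const.mul (continuousAt_const.mul
          (continuousAt_const.sub continuousAt_id))).tendsto
      simpa using h1
  -- limits of P
  have hPi : Filter.Tendsto P (nhdsWithin ri (Set.Ioo ri ro)) (nhds 0) := by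
    have h1 := (hPc ri (Set.left_mem_Icc.2 hio.le)).tendsto
    have h2 : P ri = 0 := intervalIntegral.integral_same
    rw [h2] at h1
    exact h1.mono_left (nhdsWithin_mono _ Set.Ioo_subset_Icc_self)
  have hPo : Filter.Tendsto P (nhdsWithin ro (Set.Ioo ri ro)) (nhds (P ro)) := by
    have h1 := (hPc ro (Set.right_mem_Icc.2 hio.le)).tendsto
    exact h1.mono_left (nhdsWithin_mono _ Set.Ioo_subset_Icc_self)
  have hNBi : (nhdsWithin ri (Set.Ioo ri ro)).NeBot := by
    apply mem_closure_iff_nhdsWithin_neBot.1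
    rw [closure_Ioo hio.ne]; exact Set.left_mem_Icc.2 hio.le
  have hNBo : (nhdsWithin ro (Set.Ioo ri ro)).NeBot := by
    apply mem_closure_iff_nhdsWithin_neBot.1
    rw [closure_Ioo hio.ne]; exact Set.right_mem_Icc.2 hio.le
  -- step 1 : H u ≤ P u on Ioo
  have step1 : ∀ u ∈ Set.Ioo ri ro, H u ≤ P u := by
    intro u hu
    have hle : ∀ᶠ s in nhdsWithin ri (Set.Ioo ri ro), P s - H s ≤ P u - H u := by
      have hlt : ∀ᶠ s in nhdsWithin ri (Set.Ioo ri ro), s < u := by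
        have : Filter.Tendsto (fun s : ℝ => s) (nhdsWithin ri (Set.Ioo ri ro)) (nhds ri) :=
          Filter.tendsto_id.mono_left nhdsWithin_le_nhds
        exact this.eventually_lt_const hu.1
      filter_upwards [hlt, self_mem_nhdsWithin] with s hs1 hs2
      exact hMono hs2 hu hs1.le
    have hlim : Filter.Tendsto (fun s => P s - H s) (nhdsWithin ri (Set.Ioo ri ro))
        (nhds 0) := by simpa using hPi.sub hHi
    have := le_of_tendsto hlim hle
    linarith
  -- step 2 : take u → ro
  have hI0 : 0 ≤ P ro := by
    have h1 : Filter.Tendsto H (nhdsWithin ro (Set.Ioo ri ro)) (nhds 0) := hHo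
    refine le_of_tendsto_of_tendsto h1 hPo ?_
    filter_upwards [self_mem_nhdsWithin] with u hu using step1 u hu
  -- convert
  have hInt1 : IntervalIntegrable (fun t => t * dw t ^ 2) volume ri ro := by
    apply ContinuousOn.intervalIntegrable
    rw [Set.uIcc_of_le hio.le]
    exact continuousOn_id.mul (hdwc.pow 2)
  have hInt2 : IntervalIntegrable (fun t => W ^ 2 * (g t ^ 2 / t)) volume ri ro := by
    apply ContinuousOn.intervalIntegrable
    rw [Set.uIcc_of_le hio.le]
    exact continuousOn_const.mul (((hgc.pow 2).div continuousOn_id)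
      (fun t ht => (hri.trans_le ht.1).ne'))
  have hsub : P ro = (∫ t in ri..ro, t * dw t ^ 2) - ∫ t in ri..ro, W ^ 2 * (g t ^ 2 / t) :=
    intervalIntegral.integral_sub hInt1 hInt2
  have hconst : (∫ t in ri..ro, W ^ 2 * (g t ^ 2 / t)) = W ^ 2 * ∫ t in ri..ro, g t ^ 2 / t :=
    intervalIntegral.integral_const_mul _ _
  have hcongr : (∫ t in ri..ro, t * (deriv g t) ^ 2) = ∫ t in ri..ro, t * dw t ^ 2 := by
    apply intervalIntegral.integral_congr_ae
    have hane : ∀ᵐ (x : ℝ), x ∉ ({ro} : Set ℝ) := by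
      exact MeasureTheory.measure_eq_zero_iff_ae_notMem.mp Real.volume_singleton
    filter_upwards [hane] with x hx hmem
    rw [Set.uIoc_of_le hio.le] at hmem
    have hxo : x ∈ Set.Ioo ri ro := ⟨hmem.1, lt_of_le_of_ne hmem.2 (by simpa using hx)⟩
    rw [← derivWithin_of_mem_nhds (hIccmem x hxo)]
  rw [ge_iff_le, hk, hcongr]
  rw [hsub, hconst] at hI0
  linarith
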